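/- Let D ⊆ ℝ^K be a nonempty compact set and define V : ℝ^K → ℝ by V(x) = min_{z∈D} (1/2)‖x − z‖², and let P̃_D(x) := {z ∈ D : ‖x − z‖ = infDist(x, D)} be the set of nearest points of D to x. Then for every x ∈ ℝ^K, the superdifferential of V at x satisfies D⁺V(x) = closed convex hull of {x − p : p ∈ P̃_D(x)}. -/

import Mathlib

open Filter Topology Metric
open scoped RealInnerProductSpace

/-- The superdifferential `D⁺V(x)`: the set of `p` with
`limsup_{y→x} (V(y) − V(x) − ⟪p, y − x⟫)/‖y − x‖ ≤ 0`. -/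
noncomputable def superDiff {K : ℕ} (V : EuclideanSpace ℝ (Fin K) → ℝ)
    (x : EuclideanSpace ℝ (Fin K)) : Set (EuclideanSpace ℝ (Fin K)) :=
  {p | Filter.limsup
      (fun y => (((V y - V x - ⟪p, y - x⟫) / ‖y - x‖ : ℝ) : EReal)) (𝓝[≠] x)
    ≤ 0}

section Aux

variable {K : ℕ}

lemma aux_bddBelow (D : Set (EuclideanSpace ℝ (Fin K))) (x : EuclideanSpace ℝ (Fin K)) :
    BddBelow ((fun w => (1 / 2 : ℝ) * ‖x - w‖ ^ 2) '' D) := by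
  refine ⟨0, ?_⟩
  rintro a ⟨w, hw, rfl⟩
  positivity

lemma aux_le (D : Set (EuclideanSpace ℝ (Fin K))) (x : EuclideanSpace ℝ (Fin K))
    {z : EuclideanSpace ℝ (Fin K)} (hz : z ∈ D) :
    sInf ((fun w => (1 / 2 : ℝ) * ‖x - w‖ ^ 2) '' D) ≤ (1 / 2 : ℝ) * ‖x - z‖ ^ 2 :=
  csInf_le (aux_bddBelow D x) ⟨z, hz, rfl⟩

lemma aux_val {D : Set (EuclideanSpace ℝ (Fin K))} (hne : D.Nonempty)
    {x z : EuclideanSpace ℝ (Fin K)} (hz : z ∈ D)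
    (hmin : ‖x - z‖ = infDist x D) :
    sInf ((fun w => (1 / 2 : ℝ) * ‖x - w‖ ^ 2) '' D) = (1 / 2 : ℝ) * ‖x - z‖ ^ 2 := by
  refine le_antisymm (aux_le D x hz) (le_csInf (hne.image _) ?_)
  rintro b ⟨w, hw, rfl⟩
  have h1 : ‖x - z‖ ≤ ‖x - w‖ := by
    rw [hmin, ← dist_eq_norm]
    exact infDist_le_dist_of_mem hw
  have h0 : (0 : ℝ) ≤ ‖x - z‖ := norm_nonneg _
  nlinarith

lemma aux_expand (x y z : EuclideanSpace ℝ (Fin K)) :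
    (1 / 2 : ℝ) * ‖y - z‖ ^ 2
      = ⟪x - z, y - x⟫ + (1 / 2 : ℝ) * ‖y - x‖ ^ 2 + (1 / 2 : ℝ) * ‖x - z‖ ^ 2 := by
  have h : y - z = (y - x) + (x - z) := by abel
  rw [h, norm_add_sq_real, real_inner_comm]
  ring

end Aux

/-- for a nonempty compact set `D ⊆ ℝ^K` and
`V(x) = min_{z∈D} (1/2)‖x − z‖²`, the superdifferential of `V` at every `x` is
the closed convex hull of `{x − p : p ∈ P̃_D(x)}`, where `P̃_D(x)` is the set of
nearest points of `D` to `x`. -/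
theorem stmt8 {K : ℕ} (D : Set (EuclideanSpace ℝ (Fin K)))
    (hne : D.Nonempty) (hcomp : IsCompact D)
    (V : EuclideanSpace ℝ (Fin K) → ℝ)
    (hV : ∀ y, V y = sInf ((fun z => (1 / 2 : ℝ) * ‖y - z‖ ^ 2) '' D)) :
    ∀ x : EuclideanSpace ℝ (Fin K),
      superDiff V x =
        closure (convexHull ℝ
          ((fun p => x - p) '' {z ∈ D | ‖x - z‖ = infDist x D})) := by
  intro x
  set S : Set (EuclideanSpace ℝ (Fin K)) := (fun p => x - p) '' {z ∈ D | ‖x - z‖ = infDist x D} with hSdef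
  -- upper bound on V-increments from nearest points of x
  have keybound : ∀ p ∈ closure (convexHull ℝ S), ∀ y : EuclideanSpace ℝ (Fin K),
      V y - V x - ⟪p, y - x⟫ ≤ (1 / 2 : ℝ) * ‖y - x‖ ^ 2 := by
    set T : Set (EuclideanSpace ℝ (Fin K)) := {p | ∀ y : EuclideanSpace ℝ (Fin K), V y - V x - ⟪p, y - x⟫ ≤ (1 / 2 : ℝ) * ‖y - x‖ ^ 2}
      with hTdef
    have hTiff : T = ⋂ y : EuclideanSpace ℝ (Fin K),
        {p : EuclideanSpace ℝ (Fin K) | V y - V x - (1 / 2 : ℝ) * ‖y - x‖ ^ 2 ≤ ⟪p, y - x⟫} := by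
      ext p
      simp only [hTdef, Set.mem_iInter, Set.mem_setOf_eq]
      constructor <;> intro h y <;> linarith [h y]
    have hTconvex : Convex ℝ T := by
      rw [hTiff]
      refine convex_iInter fun y => convex_halfSpace_ge ?_ _
      exact ⟨fun a b => inner_add_left a b _, fun c a => real_inner_smul_left a _ c⟩
    have hTclosed : IsClosed T := by
      rw [hTiff]
      exact isClosed_iInter fun y =>
        isClosed_le continuous_const (continuous_id.inner continuous_const)
    have hST : S ⊆ T := by
      rintro _ ⟨z, ⟨hzD, hzmin⟩, rfl⟩ y
      have hVy : V y ≤ (1 / 2 : ℝ) * ‖y - z‖ ^ 2 := by rw [hV y]; exact aux_le D y hzD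
      have hVx : V x = (1 / 2 : ℝ) * ‖x - z‖ ^ 2 := by rw [hV x]; exact aux_val hne hzD hzmin
      have hexp := aux_expand x y z
      linarith
    exact fun p hp y => (closure_minimal (convexHull_min hST hTconvex) hTclosed hp) y
  -- lower bound on V-increments from nearest points of y
  have Vdiff_ge : ∀ (y w : EuclideanSpace ℝ (Fin K)), w ∈ D → ‖y - w‖ = infDist y D →
      ⟪x - w, y - x⟫ + (1 / 2 : ℝ) * ‖y - x‖ ^ 2 ≤ V y - V x := by
    intro y w hwD hwmin
    have h1 : V y = (1 / 2 : ℝ) * ‖y - w‖ ^ 2 := by rw [hV y]; exact aux_val hne hwD hwmin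
    have h2 : V x ≤ (1 / 2 : ℝ) * ‖x - w‖ ^ 2 := by rw [hV x]; exact aux_le D x hwD
    have h3 := aux_expand x y w
    linarith
  ext p
  simp only [superDiff, Set.mem_setOf_eq]
  constructor
  · -- hard direction: superdifferential ⊆ closed convex hull
    intro hp
    by_contra hpC
    obtain ⟨f, u, hfC, hup⟩ :=
      geometric_hahn_banach_closed_point ((convex_convexHull ℝ S).closure) isClosed_closure hpC
    set v : EuclideanSpace ℝ (Fin K) := (InnerProductSpace.toDual ℝ (EuclideanSpace ℝ (Fin K))).symm f with hvdef
    have hv : ∀ a : EuclideanSpace ℝ (Fin K), ⟪a, v⟫ = f a := fun a => by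
      rw [real_inner_comm]; exact InnerProductSpace.toDual_symm_apply
    -- existence of a nearest point of x
    obtain ⟨z₀, hz₀D, hz₀⟩ := hcomp.exists_infDist_eq_dist hne x
    have hq₀S : x - z₀ ∈ S := ⟨z₀, ⟨hz₀D, by rw [dist_eq_norm] at hz₀; exact hz₀.symm⟩, rfl⟩
    have hq₀C : x - z₀ ∈ closure (convexHull ℝ S) :=
      subset_closure (subset_convexHull ℝ S hq₀S)
    have hvne : v ≠ 0 := by
      intro h0
      have h1 := hv (x - z₀)
      have h2 := hv p
      rw [h0, inner_zero_right] at h1 h2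
      have := hfC _ hq₀C
      linarith
    have hvpos : (0 : ℝ) < ‖v‖ := norm_pos_iff.mpr hvne
    set δ : ℝ := (f p - u) / ‖v‖ with hδdef
    have hδpos : 0 < δ := by
      apply div_pos _ hvpos
      linarith [hfC _ hq₀C]
    -- the approaching sequence
    set t : ℕ → ℝ := fun n => 1 / (n + 1) with htdef
    have htpos : ∀ n, 0 < t n := fun n => by positivity
    set y : ℕ → EuclideanSpace ℝ (Fin K) := fun n => x - t n • v with hydef
    have hyx : ∀ n, y n ≠ x := by
      intro n h
      have : t n • v = 0 := sub_eq_self.mp h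
      exact smul_ne_zero (ne_of_gt (htpos n)) hvne this
    have ht0 : Tendsto t atTop (𝓝 0) := tendsto_one_div_add_atTop_nhds_zero_nat
    have hyten : Tendsto y atTop (𝓝 x) := by
      have h1 : Tendsto (fun n => t n • v) atTop (𝓝 ((0 : ℝ) • v)) := ht0.smul_const v
      rw [zero_smul] at h1
      have h2 : Tendsto (fun n => x - t n • v) atTop (𝓝 (x - 0)) :=
        tendsto_const_nhds.sub h1
      rw [sub_zero] at h2
      exact h2
    -- nearest points of y n
    choose z hzD hzdist using fun n => hcomp.exists_infDist_eq_dist hne (y n)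
    have hzmin : ∀ n, ‖y n - z n‖ = infDist (y n) D := by
      intro n
      rw [← dist_eq_norm]
      exact (hzdist n).symm
    obtain ⟨zs, hzsD, φ, hφmono, hzconv⟩ := hcomp.tendsto_subseq hzD
    have hyφ : Tendsto (fun k => y (φ k)) atTop (𝓝 x) := hyten.comp hφmono.tendsto_atTop
    -- the limit zs is a nearest point of x
    have hzsmin : ‖x - zs‖ = infDist x D := by
      have l1 : Tendsto (fun k => dist (y (φ k)) (z (φ k))) atTop (𝓝 (dist x zs)) :=
        hyφ.dist hzconv
      have l2 : Tendsto (fun k => dist (y (φ k)) (z (φ k))) atTop (𝓝 (infDist x D)) := by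
        have := ((continuous_infDist_pt D).tendsto x).comp hyφ
        refine this.congr fun k => ?_
        exact hzdist (φ k)
      rw [← dist_eq_norm]
      exact tendsto_nhds_unique l1 l2
    have hqsC : x - zs ∈ closure (convexHull ℝ S) :=
      subset_closure (subset_convexHull ℝ S ⟨zs, ⟨hzsD, hzsmin⟩, rfl⟩)
    -- lower bound on the quotient along the sequence
    have hQ : ∀ n, (⟪p, v⟫ - ⟪x - z n, v⟫) / ‖v‖
        ≤ (V (y n) - V x - ⟪p, y n - x⟫) / ‖y n - x‖ := by
      intro n
      have hyx' : y n - x = -(t n • v) := by rw [hydef]; exact sub_sub_cancel_left _ _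
      have hnorm : ‖y n - x‖ = t n * ‖v‖ := by
        rw [hyx', norm_neg, norm_smul, Real.norm_eq_abs, abs_of_pos (htpos n)]
      have hip : ⟪p, y n - x⟫ = -(t n * ⟪p, v⟫) := by
        rw [hyx', inner_neg_right, real_inner_smul_right]
      have hiz : ⟪x - z n, y n - x⟫ = -(t n * ⟪x - z n, v⟫) := by
        rw [hyx', inner_neg_right, real_inner_smul_right]
      have hnum := Vdiff_ge (y n) (z n) (hzD n) (hzmin n)
      rw [hip, hiz, hnorm] at *
      rw [div_le_div_iff₀ hvpos (mul_pos (htpos n) hvpos)]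
      nlinarith [mul_le_mul_of_nonneg_right hnum (le_of_lt hvpos),
        mul_pos (htpos n) hvpos, sq_nonneg (t n * ‖v‖), htpos n]
    -- the lower bound tends to something > δ
    have hBten : Tendsto (fun k => (⟪p, v⟫ - ⟪x - z (φ k), v⟫) / ‖v‖) atTop
        (𝓝 ((⟪p, v⟫ - ⟪x - zs, v⟫) / ‖v‖)) := by
      have hc : Continuous fun w : EuclideanSpace ℝ (Fin K) => (⟪p, v⟫ - ⟪x - w, v⟫) / ‖v‖ := by
        apply Continuous.div_const
        exact continuous_const.sub ((continuous_const.sub continuous_id).inner continuous_const)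
      exact (hc.tendsto zs).comp hzconv
    have hδlt : δ < (⟪p, v⟫ - ⟪x - zs, v⟫) / ‖v‖ := by
      rw [hδdef, div_lt_div_iff₀ hvpos hvpos, hv p, hv (x - zs)]
      have := hfC _ hqsC
      nlinarith
    have hev2 : ∀ᶠ k in atTop, δ < (⟪p, v⟫ - ⟪x - z (φ k), v⟫) / ‖v‖ :=
      hBten.eventually (eventually_gt_nhds hδlt)
    -- contradiction with the limsup bound
    have hlt0 : Filter.limsup
        (fun w => (((V w - V x - ⟪p, w - x⟫) / ‖w - x‖ : ℝ) : EReal)) (𝓝[≠] x)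
        < ((δ : ℝ) : EReal) :=
      lt_of_le_of_lt hp (by exact_mod_cast hδpos)
    have hev3 := eventually_lt_of_limsup_lt hlt0
    have hyφ' : Tendsto (fun k => y (φ k)) atTop (𝓝[≠] x) :=
      tendsto_nhdsWithin_iff.mpr ⟨hyφ, Eventually.of_forall fun k => hyx (φ k)⟩
    have hev4 := hyφ'.eventually hev3
    obtain ⟨k, hk2, hk4⟩ := (hev2.and hev4).exists
    have hk4' : (V (y (φ k)) - V x - ⟪p, y (φ k) - x⟫) / ‖y (φ k) - x‖ < δ := by
      exact_mod_cast hk4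
    have := hQ (φ k)
    linarith
  · -- easy direction: closed convex hull ⊆ superdifferential
    intro hp
    have hb := keybound p hp
    by_contra hcon
    rw [not_le] at hcon
    obtain ⟨c, hc0, hclt⟩ := EReal.exists_between_coe_real hcon
    have hc0' : (0 : ℝ) < c := by exact_mod_cast hc0
    have htend : Tendsto (fun y : EuclideanSpace ℝ (Fin K) => ‖y - x‖ / 2) (𝓝[≠] x) (𝓝 0) := by
      have hc : Continuous fun y : EuclideanSpace ℝ (Fin K) => ‖y - x‖ / 2 :=
        ((continuous_id.sub continuous_const).norm).div_const 2
      have h1 := hc.tendsto x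
      simp only [sub_self, norm_zero, zero_div] at h1
      exact h1.mono_left nhdsWithin_le_nhds
    have h2 : ∀ᶠ y in 𝓝[≠] x, ‖y - x‖ / 2 < c :=
      htend.eventually (eventually_lt_nhds hc0')
    have hev : ∀ᶠ y in 𝓝[≠] x,
        (((V y - V x - ⟪p, y - x⟫) / ‖y - x‖ : ℝ) : EReal) ≤ ((c : ℝ) : EReal) := by
      filter_upwards [h2, self_mem_nhdsWithin] with y hy hyx
      have hyx' : y ≠ x := hyx
      have hnpos : (0 : ℝ) < ‖y - x‖ := by
        rw [norm_pos_iff]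
        exact sub_ne_zero.mpr hyx'
      rw [EReal.coe_le_coe_iff, div_le_iff₀ hnpos]
      nlinarith [hb y]
    exact absurd (limsup_le_of_le (h := hev)) (not_le.mpr hclt)
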